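/- With notation as above, let V_opt(Θ) = (1/c)[(Σ_{ℓ=1}^k ‖A_{(·,Θ_ℓ)}B_{(Θ_ℓ,·)}‖_F)² − ‖AB‖_F²] denote the minimal expected squared Frobenius error over sampling probabilities for the partition Θ = {Θ₁,…,Θ_k}, and let V_opt(fine) be the corresponding quantity for the finest partition {{1},…,{n}}. Then for every partition Θ of {1,…,n}, V_opt(Θ) ≤ V_opt(fine). -/

import Mathlib

open Finset

/-- Frobenius norm of a real matrix. -/
noncomputable def frob {m ρ : ℕ} (M : Matrix (Fin m) (Fin ρ) ℝ) : ℝ :=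
  Real.sqrt (∑ i, ∑ j, (M i j) ^ 2)

/-- Euclidean (2-)norm of a real vector. -/
noncomputable def enorm2 {n : ℕ} (v : Fin n → ℝ) : ℝ :=
  Real.sqrt (∑ i, (v i) ^ 2)

/-- Spectral (operator 2-)norm of a real matrix. -/
noncomputable def spec {m ρ : ℕ} (M : Matrix (Fin m) (Fin ρ) ℝ) : ℝ :=
  ⨆ x : {x : Fin ρ → ℝ // enorm2 x ≤ 1}, enorm2 (M.mulVec x.1)

/-- Block product `A_{(·,Θ_ℓ)} B_{(Θ_ℓ,·)} = ∑_{j : Θ j = ℓ} A_{(·,j)} B_{(j,·)}`. -/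
noncomputable def blockProd {m n ρ k : ℕ} (A : Matrix (Fin m) (Fin n) ℝ)
    (B : Matrix (Fin n) (Fin ρ) ℝ) (Θ : Fin n → Fin k) (ℓ : Fin k) :
    Matrix (Fin m) (Fin ρ) ℝ :=
  Matrix.of fun i h => ∑ j ∈ Finset.univ.filter (fun j => Θ j = ℓ), A i j * B j h

/-- The randomized estimator `Ŝ` built from a sample `r : Fin c → Fin k`. -/
noncomputable def Shat {m n ρ k : ℕ} (c : ℕ) (A : Matrix (Fin m) (Fin n) ℝ)
    (B : Matrix (Fin n) (Fin ρ) ℝ) (Θ : Fin n → Fin k) (p : Fin k → ℝ)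
    (r : Fin c → Fin k) : Matrix (Fin m) (Fin ρ) ℝ :=
  ((c : ℝ)⁻¹) • ∑ i, (p (r i))⁻¹ • blockProd A B Θ (r i)

lemma frob_eq_norm {m ρ : ℕ} (M : Matrix (Fin m) (Fin ρ) ℝ) :
    frob M = ‖(WithLp.equiv 2 ((Fin m × Fin ρ) → ℝ)).symm (fun p => M p.1 p.2)‖ := by
  rw [EuclideanSpace.norm_eq]
  simp [frob, Fintype.sum_prod_type, sq_abs]

lemma frob_sum_le {m ρ : ℕ} {ι : Type*} (s : Finset ι)
    (f : ι → Matrix (Fin m) (Fin ρ) ℝ) :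
    frob (∑ j ∈ s, f j) ≤ ∑ j ∈ s, frob (f j) := by
  simp_rw [frob_eq_norm]
  refine le_trans (le_of_eq ?_)
    (norm_sum_le s (fun j => (WithLp.equiv 2 ((Fin m × Fin ρ) → ℝ)).symm (fun p => f j p.1 p.2)))
  congr 1
  ext p
  have : ∀ (g : ι → EuclideanSpace ℝ (Fin m × Fin ρ)), (∑ i ∈ s, g i) p = ∑ i ∈ s, g i p :=
    fun g => by rw [WithLp.ofLp_sum]; exact Finset.sum_apply p s (fun i => WithLp.ofLp (g i))
  rw [this]
  simp [Matrix.sum_apply]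

lemma frob_nonneg {m ρ : ℕ} (M : Matrix (Fin m) (Fin ρ) ℝ) : 0 ≤ frob M :=
  Real.sqrt_nonneg _

theorem stmt5 (m n ρ k c : ℕ) (hc : 1 ≤ c)
    (A : Matrix (Fin m) (Fin n) ℝ) (B : Matrix (Fin n) (Fin ρ) ℝ)
    (Θ : Fin n → Fin k) (hΘ : Function.Surjective Θ) :
    (c : ℝ)⁻¹ * ((∑ ℓ, frob (blockProd A B Θ ℓ)) ^ 2 - frob (A * B) ^ 2) ≤
      (c : ℝ)⁻¹ * ((∑ j : Fin n, frob (blockProd A B (id : Fin n → Fin n) j)) ^ 2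
        - frob (A * B) ^ 2) := by
  have hblock : ∀ ℓ : Fin k, blockProd A B Θ ℓ =
      ∑ j ∈ Finset.univ.filter (fun j => Θ j = ℓ), blockProd A B (id : Fin n → Fin n) j := by
    intro ℓ
    ext i h
    simp [blockProd, Matrix.sum_apply, Finset.filter_eq']
  have key : (∑ ℓ, frob (blockProd A B Θ ℓ)) ≤
      ∑ j : Fin n, frob (blockProd A B (id : Fin n → Fin n) j) := by
    calc ∑ ℓ, frob (blockProd A B Θ ℓ)
        ≤ ∑ ℓ, ∑ j ∈ Finset.univ.filter (fun j => Θ j = ℓ),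
            frob (blockProd A B (id : Fin n → Fin n) j) := by
          refine Finset.sum_le_sum fun ℓ _ => ?_
          rw [hblock ℓ]
          exact frob_sum_le _ _
      _ = ∑ j : Fin n, frob (blockProd A B (id : Fin n → Fin n) j) :=
          Finset.sum_fiberwise _ _ _
  have h1 : (0:ℝ) ≤ ∑ ℓ, frob (blockProd A B Θ ℓ) :=
    Finset.sum_nonneg fun ℓ _ => frob_nonneg _
  have h2 : (0:ℝ) ≤ (c : ℝ)⁻¹ := by positivity
  gcongr
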